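/- Let B be a Hopf algebra, L a normalized commuting 2-cocycle, and σ = L∘(id⊗S)∘Δ. Then for every n ≥ 0, L^{⋆n}∘(id⊗S)∘Δ = σ^{⋆n}, where powers are convolution powers (on B⊗B and B respectively). -/

import Mathlib

open TensorProduct Coalgebra

variable {B : Type} [Ring B] [HopfAlgebra ℂ B]

/-- The comultiplication `Λ = (id ⊗ τ ⊗ id) ∘ (Δ ⊗ Δ)` of `B ⊗ B`. -/
noncomputable def Lam : B ⊗[ℂ] B →ₗ[ℂ] (B ⊗[ℂ] B) ⊗[ℂ] (B ⊗[ℂ] B) :=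
  (TensorProduct.tensorTensorTensorComm ℂ B B B B).toLinearMap ∘ₗ
    TensorProduct.map (comul (R := ℂ)) (comul (R := ℂ))

/-- Convolution of linear functionals w.r.t. a given comultiplication. -/
noncomputable def convWith {M : Type} [AddCommGroup M] [Module ℂ M]
    (Δ : M →ₗ[ℂ] M ⊗[ℂ] M) (φ ψ : M →ₗ[ℂ] ℂ) : M →ₗ[ℂ] ℂ :=
  LinearMap.mul' ℂ ℂ ∘ₗ TensorProduct.map φ ψ ∘ₗ Δ

/-- Convolution powers `φ^{⋆n}` w.r.t. a comultiplication `Δ` and counit `ε` (the 0-th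
power being the counit). -/
noncomputable def convPowWith {M : Type} [AddCommGroup M] [Module ℂ M]
    (Δ : M →ₗ[ℂ] M ⊗[ℂ] M) (ε : M →ₗ[ℂ] ℂ) (φ : M →ₗ[ℂ] ℂ) : ℕ → (M →ₗ[ℂ] ℂ)
  | 0 => ε
  | n + 1 => convWith Δ φ (convPowWith Δ ε φ n)

/-- The counit `δ ⊗ δ` of `B ⊗ B`. -/
noncomputable def counit2 : B ⊗[ℂ] B →ₗ[ℂ] ℂ :=
  LinearMap.mul' ℂ ℂ ∘ₗ TensorProduct.map (counit (R := ℂ)) (counit (R := ℂ))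

/-- `L ⋆ μ = (L ⊗ μ) ∘ Λ : B ⊗ B → B`. -/
noncomputable def LconvMu (L : B ⊗[ℂ] B →ₗ[ℂ] ℂ) : B ⊗[ℂ] B →ₗ[ℂ] B :=
  (TensorProduct.lid ℂ B).toLinearMap ∘ₗ TensorProduct.map L (LinearMap.mul' ℂ B) ∘ₗ Lam

/-- `μ ⋆ L = (μ ⊗ L) ∘ Λ : B ⊗ B → B`. -/
noncomputable def MuConvL (L : B ⊗[ℂ] B →ₗ[ℂ] ℂ) : B ⊗[ℂ] B →ₗ[ℂ] B :=
  (TensorProduct.rid ℂ B).toLinearMap ∘ₗ TensorProduct.map (LinearMap.mul' ℂ B) L ∘ₗ Lam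

/-- `σ = L ∘ (id ⊗ S) ∘ Δ : B → ℂ`. -/
noncomputable def sigma (L : B ⊗[ℂ] B →ₗ[ℂ] ℂ) : B →ₗ[ℂ] ℂ :=
  L ∘ₗ TensorProduct.map LinearMap.id (HopfAlgebra.antipode (R := ℂ)) ∘ₗ comul (R := ℂ)

namespace Stmt15Aux

set_option linter.unusedSectionVars false

/-! ### Tailified rewriting toolkit -/

section Tails

variable {R : Type*} [CommSemiring R]
variable {M N P Q M' N' P' Q' X Y Z : Type*}
  [AddCommMonoid M] [AddCommMonoid N] [AddCommMonoid P] [AddCommMonoid Q]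
  [AddCommMonoid M'] [AddCommMonoid N'] [AddCommMonoid P'] [AddCommMonoid Q']
  [AddCommMonoid X] [AddCommMonoid Y] [AddCommMonoid Z]
  [Module R M] [Module R N] [Module R P] [Module R Q]
  [Module R M'] [Module R N'] [Module R P'] [Module R Q']
  [Module R X] [Module R Y] [Module R Z]

lemma tail_fuse (f₂ : M →ₗ[R] M') (g₂ : N →ₗ[R] N') (f₁ : P →ₗ[R] M) (g₁ : Q →ₗ[R] N)
    (t : X →ₗ[R] P ⊗[R] Q) :
    TensorProduct.map f₂ g₂ ∘ₗ (TensorProduct.map f₁ g₁ ∘ₗ t)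
      = TensorProduct.map (f₂ ∘ₗ f₁) (g₂ ∘ₗ g₁) ∘ₗ t := by
  rw [TensorProduct.map_comp, LinearMap.comp_assoc]

lemma tsL (f₂ : M →ₗ[R] M') (f₁ : P →ₗ[R] M) (g : Q →ₗ[R] N) (t : X →ₗ[R] P ⊗[R] Q) :
    TensorProduct.map (f₂ ∘ₗ f₁) g ∘ₗ t
      = TensorProduct.map f₂ g ∘ₗ (TensorProduct.map f₁ LinearMap.id ∘ₗ t) := by
  rw [tail_fuse, LinearMap.comp_id]

lemma tsL' (f₂ : M →ₗ[R] M') (f₁ : P →ₗ[R] M) (g : Q →ₗ[R] N) (t : X →ₗ[R] P ⊗[R] Q) :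
    TensorProduct.map (f₂ ∘ₗ f₁) g ∘ₗ t
      = TensorProduct.map f₂ LinearMap.id ∘ₗ (TensorProduct.map f₁ g ∘ₗ t) := by
  rw [tail_fuse, LinearMap.id_comp]

lemma tsR (f : P →ₗ[R] M) (g₂ : N →ₗ[R] N') (g₁ : Q →ₗ[R] N) (t : X →ₗ[R] P ⊗[R] Q) :
    TensorProduct.map f (g₂ ∘ₗ g₁) ∘ₗ t
      = TensorProduct.map f g₂ ∘ₗ (TensorProduct.map LinearMap.id g₁ ∘ₗ t) := by
  rw [tail_fuse, LinearMap.comp_id]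

lemma tsR' (f : P →ₗ[R] M) (g₂ : N →ₗ[R] N') (g₁ : Q →ₗ[R] N) (t : X →ₗ[R] P ⊗[R] Q) :
    TensorProduct.map f (g₂ ∘ₗ g₁) ∘ₗ t
      = TensorProduct.map LinearMap.id g₂ ∘ₗ (TensorProduct.map f g₁ ∘ₗ t) := by
  rw [tail_fuse, LinearMap.id_comp]

lemma assoc_nat_tail (f : M →ₗ[R] M') (g : N →ₗ[R] N') (h : P →ₗ[R] P')
    (t : X →ₗ[R] (M ⊗[R] N) ⊗[R] P) :
    TensorProduct.map f (TensorProduct.map g h) ∘ₗ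
        ((TensorProduct.assoc R M N P).toLinearMap ∘ₗ t)
      = (TensorProduct.assoc R M' N' P').toLinearMap ∘ₗ
          (TensorProduct.map (TensorProduct.map f g) h ∘ₗ t) := by
  rw [← LinearMap.comp_assoc, TensorProduct.map_map_comp_assoc_eq, LinearMap.comp_assoc]

lemma assoc_symm_nat_tail (f : M →ₗ[R] M') (g : N →ₗ[R] N') (h : P →ₗ[R] P')
    (t : X →ₗ[R] M ⊗[R] (N ⊗[R] P)) :
    TensorProduct.map (TensorProduct.map f g) h ∘ₗ
        ((TensorProduct.assoc R M N P).symm.toLinearMap ∘ₗ t)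
      = (TensorProduct.assoc R M' N' P').symm.toLinearMap ∘ₗ
          (TensorProduct.map f (TensorProduct.map g h) ∘ₗ t) := by
  rw [← LinearMap.comp_assoc, TensorProduct.map_map_comp_assoc_symm_eq, LinearMap.comp_assoc]

lemma comm_nat_tail (f : M →ₗ[R] M') (g : N →ₗ[R] N') (t : X →ₗ[R] N ⊗[R] M) :
    TensorProduct.map f g ∘ₗ ((TensorProduct.comm R N M).toLinearMap ∘ₗ t)
      = (TensorProduct.comm R N' M').toLinearMap ∘ₗ (TensorProduct.map g f ∘ₗ t) := by
  rw [← LinearMap.comp_assoc, TensorProduct.map_comp_comm_eq, LinearMap.comp_assoc]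

lemma symm_cancel_tail (e : M ≃ₗ[R] N) (t : X →ₗ[R] M) :
    e.symm.toLinearMap ∘ₗ (e.toLinearMap ∘ₗ t) = t := by
  ext x; simp

lemma cancel_symm_tail (e : M ≃ₗ[R] N) (t : X →ₗ[R] N) :
    e.toLinearMap ∘ₗ (e.symm.toLinearMap ∘ₗ t) = t := by
  ext x; simp

lemma ext_up_to_assoc {f g : M ⊗[R] (N ⊗[R] P) →ₗ[R] Q}
    (h : f ∘ₗ (TensorProduct.assoc R M N P).toLinearMap
        = g ∘ₗ (TensorProduct.assoc R M N P).toLinearMap) : f = g :=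
  (LinearMap.cancel_right (TensorProduct.assoc R M N P).surjective).mp h

lemma assoc_symm_nat_tail₂ (f : P →ₗ[R] P') (t : X →ₗ[R] M ⊗[R] (N ⊗[R] P)) :
    TensorProduct.map LinearMap.id f ∘ₗ ((TensorProduct.assoc R M N P).symm.toLinearMap ∘ₗ t)
      = (TensorProduct.assoc R M N P').symm.toLinearMap ∘ₗ
          (TensorProduct.map LinearMap.id (TensorProduct.map LinearMap.id f) ∘ₗ t) := by
  have h : (TensorProduct.map (LinearMap.id (M := M ⊗[R] N)) f) ∘ₗ
        (TensorProduct.assoc R M N P).symm.toLinearMap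
      = (TensorProduct.assoc R M N P').symm.toLinearMap ∘ₗ
          TensorProduct.map LinearMap.id (TensorProduct.map LinearMap.id f) := by
    apply ext_up_to_assoc
    apply TensorProduct.ext_threefold
    intro x y z
    simp
  rw [← LinearMap.comp_assoc, h, LinearMap.comp_assoc]

lemma assoc_nat_tail₁ (f : M →ₗ[R] M') (t : X →ₗ[R] (M ⊗[R] N) ⊗[R] P) :
    TensorProduct.map f LinearMap.id ∘ₗ ((TensorProduct.assoc R M N P).toLinearMap ∘ₗ t)
      = (TensorProduct.assoc R M' N P).toLinearMap ∘ₗ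
          (TensorProduct.map (TensorProduct.map f LinearMap.id) LinearMap.id ∘ₗ t) := by
  have h : (TensorProduct.map f (LinearMap.id (M := N ⊗[R] P))) ∘ₗ
        (TensorProduct.assoc R M N P).toLinearMap
      = (TensorProduct.assoc R M' N P).toLinearMap ∘ₗ
          TensorProduct.map (TensorProduct.map f LinearMap.id) LinearMap.id := by
    apply TensorProduct.ext_threefold
    intro x y z
    simp
  rw [← LinearMap.comp_assoc, h, LinearMap.comp_assoc]

lemma nat_rid_tail (f : M →ₗ[R] N) (t : X →ₗ[R] M ⊗[R] R) :
    f ∘ₗ ((TensorProduct.rid R M).toLinearMap ∘ₗ t)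
      = (TensorProduct.rid R N).toLinearMap ∘ₗ (TensorProduct.map f LinearMap.id ∘ₗ t) := by
  have h : f ∘ₗ (TensorProduct.rid R M).toLinearMap
      = (TensorProduct.rid R N).toLinearMap ∘ₗ TensorProduct.map f LinearMap.id := by
    apply TensorProduct.ext'
    intro x c
    simp
  rw [← LinearMap.comp_assoc, h, LinearMap.comp_assoc]

end Tails

/-! ### Generic convolution monoid -/

section Generic

variable {C : Type} [AddCommGroup C] [Module ℂ C] [Coalgebra ℂ C]
variable {A : Type} [Semiring A] [Algebra ℂ A]

/-- Convolution of linear maps from a coalgebra to an algebra. -/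
noncomputable def cv (f g : C →ₗ[ℂ] A) : C →ₗ[ℂ] A :=
  LinearMap.mul' ℂ A ∘ₗ TensorProduct.map f g ∘ₗ comul

/-- The unit of the convolution monoid. -/
noncomputable def cu : C →ₗ[ℂ] A := Algebra.linearMap ℂ A ∘ₗ counit

lemma cv_apply (f g : C →ₗ[ℂ] A) (x : C) (r : Coalgebra.Repr ℂ x (C × C)) :
    cv f g x = ∑ i ∈ r.index, f (r.left i) * g (r.right i) := by
  rw [cv]
  simp only [LinearMap.comp_apply]
  rw [← r.eq, map_sum, map_sum]
  simp

lemma cv_one_left (f : C →ₗ[ℂ] A) : cv cu f = f := by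
  apply LinearMap.ext
  intro x
  rw [cv_apply _ _ x (ℛ ℂ x)]
  have h := congrArg (f ∘ₗ (TensorProduct.lid ℂ C).toLinearMap)
    (Coalgebra.sum_counit_tmul_eq (ℛ ℂ x))
  simp only [map_sum, LinearMap.comp_apply, LinearEquiv.coe_coe, TensorProduct.lid_tmul] at h
  simp only [cu, LinearMap.comp_apply, Algebra.linearMap_apply, ← Algebra.smul_def]
  simpa using h

lemma cv_one_right (f : C →ₗ[ℂ] A) : cv f cu = f := by
  apply LinearMap.ext
  intro x
  rw [cv_apply _ _ x (ℛ ℂ x)]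
  have h := congrArg (f ∘ₗ (TensorProduct.rid ℂ C).toLinearMap)
    (Coalgebra.sum_tmul_counit_eq (ℛ ℂ x))
  simp only [map_sum, LinearMap.comp_apply, LinearEquiv.coe_coe, TensorProduct.rid_tmul] at h
  simp only [cu, LinearMap.comp_apply, Algebra.linearMap_apply]
  have e : ∀ i ∈ (ℛ ℂ x).index,
      f ((ℛ ℂ x).left i) * algebraMap ℂ A (counit ((ℛ ℂ x).right i))
        = counit (R := ℂ) ((ℛ ℂ x).right i) • f ((ℛ ℂ x).left i) := by
    intro i _
    rw [Algebra.smul_def]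
    exact (Algebra.commutes _ _).symm
  rw [Finset.sum_congr rfl e]
  simpa using h

lemma cv_assoc (f g h : C →ₗ[ℂ] A) : cv (cv f g) h = cv f (cv g h) := by
  apply LinearMap.ext
  intro x
  set r := ℛ ℂ x with hr
  have key := congrArg (LinearMap.mul' ℂ A ∘ₗ
      TensorProduct.map f (LinearMap.mul' ℂ A ∘ₗ TensorProduct.map g h))
    (Coalgebra.sum_tmul_tmul_eq r (fun i => ℛ ℂ (r.left i)) (fun i => ℛ ℂ (r.right i)))
  simp only [map_sum, LinearMap.comp_apply, TensorProduct.map_tmul, LinearMap.mul'_apply] at key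
  rw [cv_apply _ _ x r, cv_apply _ _ x r]
  have e1 : ∀ i ∈ r.index, cv f g (r.left i) * h (r.right i)
      = ∑ j ∈ (ℛ ℂ (r.left i)).index,
          f ((ℛ ℂ (r.left i)).left j) * ((g ((ℛ ℂ (r.left i)).right j)) * h (r.right i)) := by
    intro i _
    rw [cv_apply _ _ _ (ℛ ℂ (r.left i)), Finset.sum_mul]
    exact Finset.sum_congr rfl fun j _ => mul_assoc _ _ _
  have e2 : ∀ i ∈ r.index, f (r.left i) * cv g h (r.right i)
      = ∑ j ∈ (ℛ ℂ (r.right i)).index,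
          f (r.left i) * (g ((ℛ ℂ (r.right i)).left j) * h ((ℛ ℂ (r.right i)).right j)) := by
    intro i _
    rw [cv_apply _ _ _ (ℛ ℂ (r.right i)), Finset.mul_sum]
  rw [Finset.sum_congr rfl e1, Finset.sum_congr rfl e2]
  exact key

lemma cv_inv_unique {f g d : C →ₗ[ℂ] A} (h1 : cv f d = cu) (h2 : cv d g = cu) : f = g := by
  have h3 : cv f (cv d g) = cv (cv f d) g := (cv_assoc f d g).symm
  rw [h1, h2, cv_one_right, cv_one_left] at h3
  exact h3

lemma collapseL :
    (TensorProduct.lid ℂ C).toLinearMap ∘ₗ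
        TensorProduct.map (counit (R := ℂ)) LinearMap.id ∘ₗ comul = LinearMap.id := by
  have h : (TensorProduct.map (counit (R := ℂ)) (LinearMap.id (M := C))) ∘ₗ comul
      = TensorProduct.mk ℂ ℂ C 1 :=
    Coalgebra.rTensor_counit_comp_comul
  rw [h]
  ext x
  simp

lemma collapseR :
    (TensorProduct.rid ℂ C).toLinearMap ∘ₗ
        TensorProduct.map LinearMap.id (counit (R := ℂ)) ∘ₗ comul = LinearMap.id := by
  have h : (TensorProduct.map (LinearMap.id (M := C)) (counit (R := ℂ))) ∘ₗ comul
      = (TensorProduct.mk ℂ C ℂ).flip 1 :=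
    Coalgebra.lTensor_counit_comp_comul
  rw [h]
  ext x
  simp

lemma coassocB :
    (TensorProduct.assoc ℂ C C C).toLinearMap ∘ₗ
        (TensorProduct.map (comul (R := ℂ)) LinearMap.id ∘ₗ comul)
      = TensorProduct.map LinearMap.id (comul (R := ℂ)) ∘ₗ comul :=
  Coalgebra.coassoc

lemma mul'_map_unit_left (f : C →ₗ[ℂ] A) :
    LinearMap.mul' ℂ A ∘ₗ TensorProduct.map (Algebra.linearMap ℂ A) f
      = f ∘ₗ (TensorProduct.lid ℂ C).toLinearMap := by
  apply TensorProduct.ext'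
  intro c x
  simp [Algebra.smul_def]

lemma mul'_map_unit_right (f : C →ₗ[ℂ] A) :
    LinearMap.mul' ℂ A ∘ₗ TensorProduct.map f (Algebra.linearMap ℂ A)
      = f ∘ₗ (TensorProduct.rid ℂ C).toLinearMap := by
  apply TensorProduct.ext'
  intro x c
  rw [LinearMap.comp_apply, LinearMap.comp_apply]
  simp only [TensorProduct.map_tmul, LinearMap.mul'_apply, Algebra.linearMap_apply,
    LinearEquiv.coe_coe, TensorProduct.rid_tmul]
  rw [map_smul, Algebra.smul_def]
  exact (Algebra.commutes _ _).symm

lemma unitL_tail {X : Type} [AddCommGroup X] [Module ℂ X] (f : C →ₗ[ℂ] A)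
    (t : X →ₗ[ℂ] ℂ ⊗[ℂ] C) :
    LinearMap.mul' ℂ A ∘ₗ (TensorProduct.map (Algebra.linearMap ℂ A) f ∘ₗ t)
      = f ∘ₗ ((TensorProduct.lid ℂ C).toLinearMap ∘ₗ t) := by
  rw [← LinearMap.comp_assoc, mul'_map_unit_left, LinearMap.comp_assoc]

lemma unitR_tail {X : Type} [AddCommGroup X] [Module ℂ X] (f : C →ₗ[ℂ] A)
    (t : X →ₗ[ℂ] C ⊗[ℂ] ℂ) :
    LinearMap.mul' ℂ A ∘ₗ (TensorProduct.map f (Algebra.linearMap ℂ A) ∘ₗ t)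
      = f ∘ₗ ((TensorProduct.rid ℂ C).toLinearMap ∘ₗ t) := by
  rw [← LinearMap.comp_assoc, mul'_map_unit_right, LinearMap.comp_assoc]

end Generic

section Scalar

variable {C : Type} [AddCommGroup C] [Module ℂ C] [Coalgebra ℂ C]

lemma cu_scalar : (cu : C →ₗ[ℂ] ℂ) = counit := by
  apply LinearMap.ext
  intro x
  simp [cu]

lemma convWith_eq_cv (φ ψ : C →ₗ[ℂ] ℂ) : convWith (comul (R := ℂ)) φ ψ = cv φ ψ := rfl

lemma convPow_succ {M : Type} [AddCommGroup M] [Module ℂ M]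
    (Δ : M →ₗ[ℂ] M ⊗[ℂ] M) (ε : M →ₗ[ℂ] ℂ) (φ : M →ₗ[ℂ] ℂ) (n : ℕ) :
    convPowWith Δ ε φ (n + 1) = convWith Δ φ (convPowWith Δ ε φ n) := rfl

lemma convPow_succ' (φ : C →ₗ[ℂ] ℂ) (n : ℕ) :
    convPowWith (comul (R := ℂ)) (counit (R := ℂ)) φ (n + 1)
      = convWith (comul (R := ℂ)) (convPowWith (comul (R := ℂ)) (counit (R := ℂ)) φ n) φ := by
  induction n with
  | zero =>
      rw [convPow_succ]
      show cv φ cu = cv cu φ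
      rw [cv_one_left, cv_one_right]
  | succ n ih =>
      have comm : cv φ (convPowWith (comul (R := ℂ)) (counit (R := ℂ)) φ n)
          = cv (convPowWith (comul (R := ℂ)) (counit (R := ℂ)) φ n) φ :=
        (convPow_succ _ _ φ n).symm.trans ih
      rw [convPow_succ _ _ φ (n+1), ih]
      exact (cv_assoc φ _ φ).symm.trans (congrArg (fun t => cv t φ) comm)

end Scalar


/-! ### Hopf algebra lemmas -/

section Hopf

variable {B : Type} [Ring B] [HopfAlgebra ℂ B]

/-- `(a⊗b)⊗c ↦ (a⊗c)⊗b`. -/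
noncomputable def sh : (B ⊗[ℂ] B) ⊗[ℂ] B →ₗ[ℂ] (B ⊗[ℂ] B) ⊗[ℂ] B :=
  (TensorProduct.assoc ℂ B B B).symm.toLinearMap ∘ₗ
    TensorProduct.map LinearMap.id (TensorProduct.comm ℂ B B).toLinearMap ∘ₗ
      (TensorProduct.assoc ℂ B B B).toLinearMap

/-- `T = (id ⊗ S) ∘ Δ`. -/
noncomputable def Tm : B →ₗ[ℂ] B ⊗[ℂ] B :=
  TensorProduct.map LinearMap.id (HopfAlgebra.antipode (R := ℂ)) ∘ₗ comul (R := ℂ)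

lemma lam_eq : Lam (B := B) = comul (R := ℂ) := rfl

lemma c2_eq : counit2 (B := B) = counit (R := ℂ) := by
  apply TensorProduct.ext'
  intro x y
  simp [counit2, mul_comm]

lemma antiR_tail :
    LinearMap.mul' ℂ B ∘ₗ
        (TensorProduct.map (HopfAlgebra.antipode (R := ℂ)) LinearMap.id ∘ₗ comul (R := ℂ))
      = Algebra.linearMap ℂ B ∘ₗ counit (R := ℂ) :=
  HopfAlgebra.mul_antipode_rTensor_comul

lemma antiL_tail :
    LinearMap.mul' ℂ B ∘ₗ
        (TensorProduct.map LinearMap.id (HopfAlgebra.antipode (R := ℂ)) ∘ₗ comul (R := ℂ))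
      = Algebra.linearMap ℂ B ∘ₗ counit (R := ℂ) :=
  HopfAlgebra.mul_antipode_lTensor_comul

lemma antiR_tail' :
    (LinearMap.mul' ℂ B ∘ₗ TensorProduct.map (HopfAlgebra.antipode (R := ℂ)) LinearMap.id) ∘ₗ
        comul (R := ℂ)
      = Algebra.linearMap ℂ B ∘ₗ counit (R := ℂ) := by
  rw [LinearMap.comp_assoc]; exact antiR_tail

lemma antiL_tail' :
    (LinearMap.mul' ℂ B ∘ₗ TensorProduct.map LinearMap.id (HopfAlgebra.antipode (R := ℂ))) ∘ₗ
        comul (R := ℂ)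
      = Algebra.linearMap ℂ B ∘ₗ counit (R := ℂ) := by
  rw [LinearMap.comp_assoc]; exact antiL_tail

lemma antiT : LinearMap.mul' ℂ B ∘ₗ Tm (B := B) = Algebra.linearMap ℂ B ∘ₗ counit (R := ℂ) :=
  antiL_tail

lemma counit_antipode :
    (counit (R := ℂ)) ∘ₗ (HopfAlgebra.antipode (R := ℂ) (A := B)) = counit (R := ℂ) := by
  have e1 : cv (counit (R := ℂ))
      ((counit (R := ℂ)) ∘ₗ (HopfAlgebra.antipode (R := ℂ) (A := B))) = counit (R := ℂ) := by
    apply LinearMap.ext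
    intro x
    rw [cv_apply _ _ x (ℛ ℂ x)]
    have h := congrArg (counit (R := ℂ) (A := B))
      (HopfAlgebra.sum_mul_antipode_eq_algebraMap_counit (R := ℂ) (ℛ ℂ x))
    simp only [map_sum, Bialgebra.counit_mul] at h ⊢
    simpa using h
  rw [← cv_one_left ((counit (R := ℂ)) ∘ₗ (HopfAlgebra.antipode (R := ℂ) (A := B))),
    cu_scalar, e1]

lemma mulBB_split :
    LinearMap.mul' ℂ (B ⊗[ℂ] B)
      = TensorProduct.map (LinearMap.mul' ℂ B) (LinearMap.mul' ℂ B) ∘ₗ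
          (TensorProduct.tensorTensorTensorComm ℂ B B B B).toLinearMap := by
  apply TensorProduct.ext_fourfold'
  intro a b c d
  simp [Algebra.TensorProduct.tmul_mul_tmul]

lemma PL3t {X : Type} [AddCommGroup X] [Module ℂ X]
    (t : X →ₗ[ℂ] (B ⊗[ℂ] B) ⊗[ℂ] (B ⊗[ℂ] B)) :
    (TensorProduct.tensorTensorTensorComm ℂ B B B B).toLinearMap ∘ₗ
        (TensorProduct.map LinearMap.id
            (TensorProduct.map (HopfAlgebra.antipode (R := ℂ)) (HopfAlgebra.antipode (R := ℂ)))
          ∘ₗ t)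
      = TensorProduct.map (TensorProduct.map LinearMap.id (HopfAlgebra.antipode (R := ℂ)))
            (TensorProduct.map LinearMap.id (HopfAlgebra.antipode (R := ℂ))) ∘ₗ
          ((TensorProduct.tensorTensorTensorComm ℂ B B B B).toLinearMap ∘ₗ t) := by
  have h : (TensorProduct.tensorTensorTensorComm ℂ B B B B).toLinearMap ∘ₗ
        TensorProduct.map LinearMap.id
          (TensorProduct.map (HopfAlgebra.antipode (R := ℂ)) (HopfAlgebra.antipode (R := ℂ)))
      = TensorProduct.map (TensorProduct.map LinearMap.id (HopfAlgebra.antipode (R := ℂ)))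
            (TensorProduct.map LinearMap.id (HopfAlgebra.antipode (R := ℂ))) ∘ₗ
          (TensorProduct.tensorTensorTensorComm ℂ B B B B).toLinearMap := by
    apply TensorProduct.ext_fourfold'
    intro a b c d
    simp
  rw [← LinearMap.comp_assoc, h, LinearMap.comp_assoc]

lemma PL6t {X : Type} [AddCommGroup X] [Module ℂ X] (t : X →ₗ[ℂ] B ⊗[ℂ] (B ⊗[ℂ] B)) :
    (TensorProduct.rid ℂ (B ⊗[ℂ] B)).toLinearMap ∘ₗ
        (TensorProduct.map LinearMap.id (counit (R := ℂ)) ∘ₗ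
          ((TensorProduct.assoc ℂ B B B).symm.toLinearMap ∘ₗ t))
      = TensorProduct.map LinearMap.id
            ((TensorProduct.rid ℂ B).toLinearMap ∘ₗ
              TensorProduct.map LinearMap.id (counit (R := ℂ))) ∘ₗ t := by
  have h : ((TensorProduct.rid ℂ (B ⊗[ℂ] B)).toLinearMap ∘ₗ
        TensorProduct.map LinearMap.id (counit (R := ℂ))) ∘ₗ
          (TensorProduct.assoc ℂ B B B).symm.toLinearMap
      = TensorProduct.map LinearMap.id
          ((TensorProduct.rid ℂ B).toLinearMap ∘ₗ
            TensorProduct.map LinearMap.id (counit (R := ℂ))) := by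
    apply ext_up_to_assoc
    apply TensorProduct.ext_threefold
    intro x y z
    simp
  rw [← LinearMap.comp_assoc, ← LinearMap.comp_assoc, h]

lemma PL7i :
    ((TensorProduct.rid ℂ B).toLinearMap ∘ₗ TensorProduct.map LinearMap.id (counit (R := ℂ))) ∘ₗ
        ((TensorProduct.comm ℂ B B).toLinearMap ∘ₗ comul (R := ℂ)) = LinearMap.id := by
  have h : ((TensorProduct.rid ℂ B).toLinearMap ∘ₗ
        TensorProduct.map LinearMap.id (counit (R := ℂ))) ∘ₗ (TensorProduct.comm ℂ B B).toLinearMap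
      = (TensorProduct.lid ℂ B).toLinearMap ∘ₗ TensorProduct.map (counit (R := ℂ)) LinearMap.id := by
    apply TensorProduct.ext'
    intro x y
    simp
  rw [← LinearMap.comp_assoc, h, LinearMap.comp_assoc]
  exact collapseL

lemma Elem :
    (TensorProduct.rid ℂ (B ⊗[ℂ] B)).toLinearMap ∘ₗ
        (TensorProduct.map LinearMap.id (counit (R := ℂ)) ∘ₗ
          (sh ∘ₗ (TensorProduct.map (comul (R := ℂ)) LinearMap.id ∘ₗ comul (R := ℂ))))
      = comul (R := ℂ) (A := B) := by
  rw [sh]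
  simp only [LinearMap.comp_assoc]
  rw [coassocB]
  rw [tail_fuse, LinearMap.id_comp]
  rw [PL6t]
  rw [tail_fuse, LinearMap.id_comp]
  rw [PL7i]
  rw [TensorProduct.map_id, LinearMap.id_comp]

lemma E' :
    TensorProduct.map LinearMap.id (counit (R := ℂ)) ∘ₗ
        (sh ∘ₗ (TensorProduct.map (comul (R := ℂ)) LinearMap.id ∘ₗ comul (R := ℂ)))
      = (TensorProduct.rid ℂ (B ⊗[ℂ] B)).symm.toLinearMap ∘ₗ comul (R := ℂ) := by
  have h := congrArg (fun t => (TensorProduct.rid ℂ (B ⊗[ℂ] B)).symm.toLinearMap ∘ₗ t)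
    (Elem (B := B))
  rw [symm_cancel_tail] at h
  exact h

lemma stepB :
    (TensorProduct.assoc ℂ (B ⊗[ℂ] B) B B).toLinearMap ∘ₗ
        (TensorProduct.map (TensorProduct.map (comul (R := ℂ)) LinearMap.id) LinearMap.id ∘ₗ
          (TensorProduct.map (comul (R := ℂ)) LinearMap.id ∘ₗ comul (R := ℂ)))
      = TensorProduct.map (comul (R := ℂ)) (comul (R := ℂ)) ∘ₗ comul (R := ℂ) := by
  rw [← assoc_nat_tail₁]
  rw [coassocB]
  rw [tail_fuse, LinearMap.comp_id, LinearMap.id_comp]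

lemma stepB' :
    TensorProduct.map (TensorProduct.map (comul (R := ℂ)) LinearMap.id) LinearMap.id ∘ₗ
        (TensorProduct.map (comul (R := ℂ)) LinearMap.id ∘ₗ comul (R := ℂ))
      = (TensorProduct.assoc ℂ (B ⊗[ℂ] B) B B).symm.toLinearMap ∘ₗ
          (TensorProduct.map (comul (R := ℂ)) (comul (R := ℂ)) ∘ₗ comul (R := ℂ)) := by
  rw [← stepB, symm_cancel_tail]

lemma Rlem :
    TensorProduct.map LinearMap.id (comul (R := ℂ)) ∘ₗ
        (sh ∘ₗ (TensorProduct.map (comul (R := ℂ)) LinearMap.id ∘ₗ comul (R := ℂ)))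
      = (TensorProduct.tensorTensorTensorComm ℂ B B B B).toLinearMap ∘ₗ
          (TensorProduct.map LinearMap.id (TensorProduct.comm ℂ B B).toLinearMap ∘ₗ
            (TensorProduct.map (comul (R := ℂ)) (comul (R := ℂ)) ∘ₗ comul (R := ℂ))) := by
  rw [sh]
  simp only [LinearMap.comp_assoc]
  rw [coassocB]
  rw [tail_fuse, LinearMap.id_comp]
  rw [assoc_symm_nat_tail₂]
  rw [tail_fuse, LinearMap.id_comp]
  rw [comm_nat_tail]
  rw [tsR]
  rw [tsR]
  rw [← coassocB]
  rw [assoc_nat_tail]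
  rw [tail_fuse, LinearMap.id_comp]
  rw [← coassocB]
  rw [tsL']
  rw [tsL']
  rw [show TensorProduct.map (comul (R := ℂ) (A := B)) (comul (R := ℂ) (A := B)) ∘ₗ
        comul (R := ℂ)
      = (TensorProduct.assoc ℂ (B ⊗[ℂ] B) B B).toLinearMap ∘ₗ
          (TensorProduct.map (TensorProduct.map (comul (R := ℂ)) LinearMap.id) LinearMap.id ∘ₗ
            (TensorProduct.map (comul (R := ℂ)) LinearMap.id ∘ₗ comul (R := ℂ)))
    from stepB.symm]
  simp only [← LinearMap.comp_assoc]
  congr 1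
  congr 1
  congr 1
  apply TensorProduct.ext_fourfold
  intro a b c d
  simp

end Hopf


section HopfPure

variable {B : Type} [Ring B] [HopfAlgebra ℂ B]

lemma mkflip_unit :
    ((TensorProduct.mk ℂ B B).flip 1) ∘ₗ Algebra.linearMap ℂ B
      = Algebra.linearMap ℂ (B ⊗[ℂ] B) := by
  apply LinearMap.ext_ring
  simp [Algebra.TensorProduct.one_def]

lemma PL13t {X M : Type} [AddCommGroup X] [Module ℂ X] [AddCommGroup M] [Module ℂ M]
    (f : M →ₗ[ℂ] B) (t : X →ₗ[ℂ] M) :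
    TensorProduct.map f (Algebra.linearMap ℂ B) ∘ₗ
        ((TensorProduct.rid ℂ M).symm.toLinearMap ∘ₗ t)
      = (TensorProduct.mk ℂ B B).flip 1 ∘ₗ (f ∘ₗ t) := by
  have h : TensorProduct.map f (Algebra.linearMap ℂ B) ∘ₗ (TensorProduct.rid ℂ M).symm.toLinearMap
      = (TensorProduct.mk ℂ B B).flip 1 ∘ₗ f := by
    apply LinearMap.ext
    intro y
    simp
  rw [← LinearMap.comp_assoc, h, LinearMap.comp_assoc]

lemma PL14t {X Y : Type} [AddCommGroup X] [Module ℂ X] [AddCommGroup Y] [Module ℂ Y]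
    (F : Y →ₗ[ℂ] ℂ) (t : X →ₗ[ℂ] Y) :
    (TensorProduct.lid ℂ B).toLinearMap ∘ₗ
        (TensorProduct.map F (Algebra.linearMap ℂ B) ∘ₗ
          ((TensorProduct.rid ℂ Y).symm.toLinearMap ∘ₗ t))
      = Algebra.linearMap ℂ B ∘ₗ (F ∘ₗ t) := by
  have h : ((TensorProduct.lid ℂ B).toLinearMap ∘ₗ
        TensorProduct.map F (Algebra.linearMap ℂ B)) ∘ₗ (TensorProduct.rid ℂ Y).symm.toLinearMap
      = Algebra.linearMap ℂ B ∘ₗ F := by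
    apply LinearMap.ext
    intro y
    simp [Algebra.algebraMap_eq_smul_one]
  rw [← LinearMap.comp_assoc, ← LinearMap.comp_assoc, h, LinearMap.comp_assoc]

lemma PL9t {M N X : Type} [AddCommGroup M] [Module ℂ M] [AddCommGroup N] [Module ℂ N]
    [AddCommGroup X] [Module ℂ X]
    (χ : M →ₗ[ℂ] ℂ) (φ : N →ₗ[ℂ] ℂ) (t : X →ₗ[ℂ] M ⊗[ℂ] N) :
    LinearMap.mul' ℂ ℂ ∘ₗ (TensorProduct.map χ φ ∘ₗ t)
      = χ ∘ₗ ((TensorProduct.rid ℂ M).toLinearMap ∘ₗ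
          (TensorProduct.map LinearMap.id φ ∘ₗ t)) := by
  have h : LinearMap.mul' ℂ ℂ ∘ₗ TensorProduct.map χ φ
      = ((χ ∘ₗ (TensorProduct.rid ℂ M).toLinearMap) ∘ₗ TensorProduct.map LinearMap.id φ) := by
    apply TensorProduct.ext'
    intro x y
    simp [mul_comm]
  rw [← LinearMap.comp_assoc, h]
  simp only [LinearMap.comp_assoc]

lemma PLM1t {X : Type} [AddCommGroup X] [Module ℂ X] (t : X →ₗ[ℂ] (B ⊗[ℂ] B) ⊗[ℂ] ℂ) :
    TensorProduct.map LinearMap.id (TensorProduct.rid ℂ B).toLinearMap ∘ₗ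
        ((TensorProduct.assoc ℂ B B ℂ).toLinearMap ∘ₗ t)
      = (TensorProduct.rid ℂ (B ⊗[ℂ] B)).toLinearMap ∘ₗ t := by
  have h : TensorProduct.map LinearMap.id (TensorProduct.rid ℂ B).toLinearMap ∘ₗ
        (TensorProduct.assoc ℂ B B ℂ).toLinearMap
      = (TensorProduct.rid ℂ (B ⊗[ℂ] B)).toLinearMap := by
    apply TensorProduct.ext_threefold
    intro x y z
    simp
  rw [← LinearMap.comp_assoc, h]

lemma PL12t {X : Type} [AddCommGroup X] [Module ℂ X] (g : B →ₗ[ℂ] ℂ)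
    (t : X →ₗ[ℂ] B ⊗[ℂ] (B ⊗[ℂ] B)) :
    (TensorProduct.rid ℂ (B ⊗[ℂ] B)).toLinearMap ∘ₗ
        (TensorProduct.map LinearMap.id g ∘ₗ
          ((TensorProduct.assoc ℂ B B B).symm.toLinearMap ∘ₗ
            (TensorProduct.map LinearMap.id (TensorProduct.comm ℂ B B).toLinearMap ∘ₗ t)))
      = TensorProduct.map LinearMap.id
          ((TensorProduct.lid ℂ B).toLinearMap ∘ₗ TensorProduct.map g LinearMap.id) ∘ₗ t := by
  have h : (((TensorProduct.rid ℂ (B ⊗[ℂ] B)).toLinearMap ∘ₗ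
        TensorProduct.map LinearMap.id g) ∘ₗ (TensorProduct.assoc ℂ B B B).symm.toLinearMap) ∘ₗ
          TensorProduct.map LinearMap.id (TensorProduct.comm ℂ B B).toLinearMap
      = TensorProduct.map LinearMap.id
          ((TensorProduct.lid ℂ B).toLinearMap ∘ₗ TensorProduct.map g LinearMap.id) := by
    apply ext_up_to_assoc
    apply TensorProduct.ext_threefold
    intro x y z
    simp
  simp only [← LinearMap.comp_assoc]
  rw [h]

lemma PL1t {X : Type} [AddCommGroup X] [Module ℂ X] (g : B →ₗ[ℂ] ℂ)
    (t : X →ₗ[ℂ] (B ⊗[ℂ] B) ⊗[ℂ] (B ⊗[ℂ] B)) :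
    LinearMap.mul' ℂ B ∘ₗ
        (TensorProduct.map (TensorProduct.rid ℂ B).toLinearMap LinearMap.id ∘ₗ
          (TensorProduct.map
              (TensorProduct.map
                (LinearMap.mul' ℂ B ∘ₗ TensorProduct.map LinearMap.id (HopfAlgebra.antipode (R := ℂ)))
                g) LinearMap.id ∘ₗ
            (TensorProduct.map sh LinearMap.id ∘ₗ
              ((TensorProduct.assoc ℂ (B ⊗[ℂ] B) B B).symm.toLinearMap ∘ₗ t))))
      = LinearMap.mul' ℂ B ∘ₗ
          (TensorProduct.map
              ((TensorProduct.rid ℂ B).toLinearMap ∘ₗ TensorProduct.map LinearMap.id g)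
              (LinearMap.mul' ℂ B ∘ₗ
                TensorProduct.map (HopfAlgebra.antipode (R := ℂ)) LinearMap.id) ∘ₗ t) := by
  have h : (((LinearMap.mul' ℂ B ∘ₗ
        TensorProduct.map (TensorProduct.rid ℂ B).toLinearMap LinearMap.id) ∘ₗ
          TensorProduct.map
              (TensorProduct.map
                (LinearMap.mul' ℂ B ∘ₗ TensorProduct.map LinearMap.id (HopfAlgebra.antipode (R := ℂ)))
                g) LinearMap.id) ∘ₗ
            TensorProduct.map sh LinearMap.id) ∘ₗ
              (TensorProduct.assoc ℂ (B ⊗[ℂ] B) B B).symm.toLinearMap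
      = LinearMap.mul' ℂ B ∘ₗ
          TensorProduct.map
              ((TensorProduct.rid ℂ B).toLinearMap ∘ₗ TensorProduct.map LinearMap.id g)
              (LinearMap.mul' ℂ B ∘ₗ
                TensorProduct.map (HopfAlgebra.antipode (R := ℂ)) LinearMap.id) := by
    apply TensorProduct.ext_fourfold'
    intro a b c d
    simp [sh, mul_assoc]
  simp only [← LinearMap.comp_assoc]
  rw [h]

end HopfPure

section Hopf2

variable {B : Type} [Ring B] [HopfAlgebra ℂ B]

lemma comul_antipode :
    (comul (R := ℂ)) ∘ₗ (HopfAlgebra.antipode (R := ℂ) (A := B))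
      = TensorProduct.map (HopfAlgebra.antipode (R := ℂ)) (HopfAlgebra.antipode (R := ℂ)) ∘ₗ
          ((TensorProduct.comm ℂ B B).toLinearMap ∘ₗ comul (R := ℂ)) := by
  apply cv_inv_unique (d := (comul (R := ℂ) : B →ₗ[ℂ] B ⊗[ℂ] B))
  · -- `cv (Δ∘S) Δ = cu`
    apply LinearMap.ext
    intro x
    rw [cv_apply _ _ x (ℛ ℂ x)]
    have e : ∀ i ∈ (ℛ ℂ x).index,
        ((comul (R := ℂ)) ∘ₗ (HopfAlgebra.antipode (R := ℂ) (A := B))) ((ℛ ℂ x).left i) *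
            comul ((ℛ ℂ x).right i)
          = comul (HopfAlgebra.antipode (R := ℂ) ((ℛ ℂ x).left i) * (ℛ ℂ x).right i) := by
      intro i _
      rw [LinearMap.comp_apply]
      exact (Bialgebra.comul_mul _ _).symm
    rw [Finset.sum_congr rfl e, ← map_sum, HopfAlgebra.sum_antipode_mul_eq_algebraMap_counit]
    simp [cu, Algebra.algebraMap_eq_smul_one]
  · -- `cv Δ ((S⊗S)∘τ∘Δ) = cu`
    show LinearMap.mul' ℂ (B ⊗[ℂ] B) ∘ₗ
        (TensorProduct.map (comul (R := ℂ))
            (TensorProduct.map (HopfAlgebra.antipode (R := ℂ)) (HopfAlgebra.antipode (R := ℂ)) ∘ₗ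
              ((TensorProduct.comm ℂ B B).toLinearMap ∘ₗ comul (R := ℂ))) ∘ₗ comul (R := ℂ))
      = cu
    rw [tsR']
    rw [tsR']
    rw [mulBB_split]
    simp only [LinearMap.comp_assoc]
    rw [PL3t]
    rw [tail_fuse]
    rw [← Rlem]
    rw [tail_fuse, LinearMap.comp_id]
    rw [antiL_tail']
    rw [tsR]
    rw [E']
    rw [PL13t]
    rw [antiL_tail']
    rw [← LinearMap.comp_assoc]
    rw [mkflip_unit]
    rfl

lemma claimA :
    Lam ∘ₗ Tm (B := B)
      = TensorProduct.map (TensorProduct.map LinearMap.id (HopfAlgebra.antipode (R := ℂ))) Tm ∘ₗ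
          (sh ∘ₗ (TensorProduct.map (comul (R := ℂ)) LinearMap.id ∘ₗ comul (R := ℂ))) := by
  rw [Lam, Tm]
  simp only [LinearMap.comp_assoc]
  rw [tail_fuse, LinearMap.comp_id]
  rw [comul_antipode]
  rw [tsR']
  rw [tsR']
  rw [PL3t]
  rw [← Rlem]
  rw [tail_fuse, LinearMap.comp_id]

lemma starA (L : B ⊗[ℂ] B →ₗ[ℂ] ℂ) :
    LconvMu L ∘ₗ Tm = Algebra.linearMap ℂ B ∘ₗ sigma L := by
  show (TensorProduct.lid ℂ B).toLinearMap ∘ₗ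
      (TensorProduct.map L (LinearMap.mul' ℂ B) ∘ₗ (Lam ∘ₗ Tm)) = _
  rw [claimA]
  rw [tail_fuse]
  rw [antiT]
  rw [tsR]
  rw [E']
  rw [PL14t]
  rfl

lemma starB (L : B ⊗[ℂ] B →ₗ[ℂ] ℂ) :
    MuConvL L ∘ₗ Tm
      = (TensorProduct.rid ℂ B).toLinearMap ∘ₗ
          (TensorProduct.map
              (LinearMap.mul' ℂ B ∘ₗ TensorProduct.map LinearMap.id (HopfAlgebra.antipode (R := ℂ)))
              (sigma L) ∘ₗ
            (sh ∘ₗ (TensorProduct.map (comul (R := ℂ)) LinearMap.id ∘ₗ comul (R := ℂ)))) := by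
  show (TensorProduct.rid ℂ B).toLinearMap ∘ₗ
      (TensorProduct.map (LinearMap.mul' ℂ B) L ∘ₗ (Lam ∘ₗ Tm)) = _
  rw [claimA]
  rw [tail_fuse]
  rfl

/-- `Jl = Σ σ(x₁)x₂`. -/
noncomputable def Jl (L : B ⊗[ℂ] B →ₗ[ℂ] ℂ) : B →ₗ[ℂ] B :=
  (TensorProduct.lid ℂ B).toLinearMap ∘ₗ TensorProduct.map (sigma L) LinearMap.id ∘ₗ
    comul (R := ℂ)

/-- `Jr = Σ x₁σ(x₂)`. -/
noncomputable def Jr (L : B ⊗[ℂ] B →ₗ[ℂ] ℂ) : B →ₗ[ℂ] B :=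
  (TensorProduct.rid ℂ B).toLinearMap ∘ₗ TensorProduct.map LinearMap.id (sigma L) ∘ₗ
    comul (R := ℂ)

lemma INV (L : B ⊗[ℂ] B →ₗ[ℂ] ℂ) (hcomm : LconvMu L = MuConvL L) : Jl L = Jr L := by
  have step1 : Jl L = LinearMap.mul' ℂ B ∘ₗ
      (TensorProduct.map (Algebra.linearMap ℂ B ∘ₗ sigma L) LinearMap.id ∘ₗ comul (R := ℂ)) := by
    conv_rhs => rw [tsL', unitL_tail]
    rw [LinearMap.id_comp]
    rfl
  have e : Algebra.linearMap ℂ B ∘ₗ sigma L = MuConvL L ∘ₗ Tm := by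
    rw [← hcomm, ← starA]
  rw [step1, e, starB]
  rw [tsL']
  rw [tsL']
  rw [tsL']
  rw [tsL']
  rw [stepB']
  rw [PL1t]
  rw [tail_fuse]
  rw [antiR_tail']
  rw [tsR]
  rw [unitR_tail]
  rw [collapseR, LinearMap.comp_id]
  simp only [LinearMap.comp_assoc]
  rfl

lemma M1 (L : B ⊗[ℂ] B →ₗ[ℂ] ℂ) :
    comul (R := ℂ) ∘ₗ Jr L = TensorProduct.map LinearMap.id (Jr L) ∘ₗ comul (R := ℂ) := by
  rw [Jr]
  rw [nat_rid_tail]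
  rw [tail_fuse, LinearMap.comp_id, LinearMap.id_comp]
  rw [tsR]
  rw [tsR]
  rw [← coassocB]
  rw [assoc_nat_tail]
  rw [TensorProduct.map_id]
  rw [tail_fuse, LinearMap.id_comp, LinearMap.comp_id]
  rw [PLM1t]

lemma M2 (L : B ⊗[ℂ] B →ₗ[ℂ] ℂ) :
    (TensorProduct.rid ℂ (B ⊗[ℂ] B)).toLinearMap ∘ₗ
        (TensorProduct.map LinearMap.id (sigma L) ∘ₗ
          (sh ∘ₗ (TensorProduct.map (comul (R := ℂ)) LinearMap.id ∘ₗ comul (R := ℂ))))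
      = TensorProduct.map LinearMap.id (Jl L) ∘ₗ comul (R := ℂ) := by
  rw [sh]
  simp only [LinearMap.comp_assoc]
  rw [coassocB]
  rw [PL12t]
  rw [← tsR]
  rfl

lemma ML (L : B ⊗[ℂ] B →ₗ[ℂ] ℂ) (hcomm : LconvMu L = MuConvL L) (ψ : B ⊗[ℂ] B →ₗ[ℂ] ℂ) :
    convWith (comul (R := ℂ)) ψ L ∘ₗ Tm
      = convWith (comul (R := ℂ)) (ψ ∘ₗ Tm) (sigma L) := by
  show LinearMap.mul' ℂ ℂ ∘ₗ (TensorProduct.map ψ L ∘ₗ (Lam ∘ₗ Tm)) = _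
  rw [claimA, tail_fuse]
  rw [show L ∘ₗ Tm (B := B) = sigma L from rfl]
  rw [PL9t]
  rw [M2]
  rw [INV L hcomm]
  rw [← M1]
  have hR : convWith (comul (R := ℂ)) (ψ ∘ₗ Tm (B := B)) (sigma L)
      = (ψ ∘ₗ Tm) ∘ₗ ((TensorProduct.rid ℂ B).toLinearMap ∘ₗ
          (TensorProduct.map LinearMap.id (sigma L) ∘ₗ comul (R := ℂ))) :=
    PL9t _ _ _
  rw [hR]
  rw [show (TensorProduct.rid ℂ B).toLinearMap ∘ₗ
      (TensorProduct.map LinearMap.id (sigma L) ∘ₗ comul (R := ℂ)) = Jr L from rfl]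
  simp only [← LinearMap.comp_assoc]
  rfl

lemma base : (counit (R := ℂ) (A := B ⊗[ℂ] B)) ∘ₗ Tm (B := B) = counit (R := ℂ) := by
  rw [← c2_eq]
  show LinearMap.mul' ℂ ℂ ∘ₗ
      (TensorProduct.map (counit (R := ℂ)) (counit (R := ℂ)) ∘ₗ
        (TensorProduct.map LinearMap.id (HopfAlgebra.antipode (R := ℂ) (A := B)) ∘ₗ comul (R := ℂ)))
    = counit (R := ℂ)
  rw [tail_fuse, LinearMap.comp_id]
  rw [counit_antipode]
  show cv (counit (R := ℂ)) (counit (R := ℂ)) = (counit (R := ℂ) (A := B))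
  rw [← cu_scalar, cv_one_left]

end Hopf2


end Stmt15Aux

/-- Let `B` be a Hopf algebra, `L` a normalized commuting 2-cocycle and
`σ = L ∘ (id ⊗ S) ∘ Δ`.  Then for every `n ≥ 0`, `L^{⋆n} ∘ (id ⊗ S) ∘ Δ = σ^{⋆n}`, where
the convolution powers are taken on `B ⊗ B` and on `B` respectively. -/
theorem stmt15 (L : B ⊗[ℂ] B →ₗ[ℂ] ℂ)
    (hnorm : L (1 ⊗ₜ[ℂ] 1) = 0)
    (hcomm : LconvMu L = MuConvL L)
    (hcocycle : ∀ a b c : B,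
      counit (R := ℂ) a * L (b ⊗ₜ[ℂ] c) - L ((a * b) ⊗ₜ[ℂ] c)
        + L (a ⊗ₜ[ℂ] (b * c)) - L (a ⊗ₜ[ℂ] b) * counit (R := ℂ) c = 0) :
    ∀ n : ℕ,
      convPowWith Lam counit2 L n ∘ₗ
          TensorProduct.map LinearMap.id (HopfAlgebra.antipode (R := ℂ)) ∘ₗ comul (R := ℂ)
        = convPowWith (comul (R := ℂ)) (counit (R := ℂ)) (sigma L) n := by
  have key : ∀ n : ℕ,
      convPowWith (comul (R := ℂ)) (counit (R := ℂ)) L n ∘ₗ Stmt15Aux.Tm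
        = convPowWith (comul (R := ℂ)) (counit (R := ℂ)) (sigma L) n := by
    intro n
    induction n with
    | zero => exact Stmt15Aux.base
    | succ n ih =>
        rw [Stmt15Aux.convPow_succ]
        have sw : convWith (comul (R := ℂ)) L
              (convPowWith (comul (R := ℂ)) (counit (R := ℂ)) L n)
            = convWith (comul (R := ℂ))
                (convPowWith (comul (R := ℂ)) (counit (R := ℂ)) L n) L :=
          (Stmt15Aux.convPow_succ _ _ L n).symm.trans (Stmt15Aux.convPow_succ' L n)
        rw [sw]
        rw [Stmt15Aux.ML L hcomm]
        rw [ih]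
        exact (Stmt15Aux.convPow_succ' (sigma L) n).symm
  intro n
  rw [Stmt15Aux.c2_eq]
  exact key n
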